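/- Let H₁, H₂ be Banach spaces, D₁ : V → W₁ and D₂ : V → W₂ bounded linear maps between Banach spaces such that the combined map D̃ = (D₁, D₂) : V → W₁ × W₂ is Fredholm. Then the restriction D₁|_{ker D₂} : ker D₂ → W₁ is Fredholm. -/

import Mathlib

/-- A bounded linear operator between normed spaces is Fredholm if it has
finite-dimensional kernel, finite-dimensional cokernel, and closed range. -/
def IsFredholm {V W : Type*}
    [NormedAddCommGroup V] [NormedSpace ℝ V]
    [NormedAddCommGroup W] [NormedSpace ℝ W]
    (f : V →L[ℝ] W) : Prop :=
  FiniteDimensional ℝ (LinearMap.ker (f : V →ₗ[ℝ] W)) ∧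
  FiniteDimensional ℝ (W ⧸ LinearMap.range (f : V →ₗ[ℝ] W)) ∧
  IsClosed ((LinearMap.range (f : V →ₗ[ℝ] W) : Submodule ℝ W) : Set W)

/-- If `D₁ : V → W₁`, `D₂ : V → W₂` are bounded linear maps
between Banach spaces such that `D̃ = (D₁, D₂) : V → W₁ × W₂` is Fredholm,
then the restriction `D₁|_{ker D₂} : ker D₂ → W₁` is Fredholm. -/
theorem isFredholm_restriction_of_isFredholm_prod
    {V W₁ W₂ : Type*}
    [NormedAddCommGroup V] [NormedSpace ℝ V] [CompleteSpace V]
    [NormedAddCommGroup W₁] [NormedSpace ℝ W₁] [CompleteSpace W₁]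
    [NormedAddCommGroup W₂] [NormedSpace ℝ W₂] [CompleteSpace W₂]
    (D₁ : V →L[ℝ] W₁) (D₂ : V →L[ℝ] W₂)
    (h : IsFredholm (D₁.prod D₂)) :
    IsFredholm (D₁.comp (LinearMap.ker (D₂ : V →ₗ[ℝ] W₂)).subtypeL) := by
  obtain ⟨hk, hc, hcl⟩ := h
  have key : ∀ w : W₁,
      w ∈ LinearMap.range ((D₁.comp (LinearMap.ker (D₂ : V →ₗ[ℝ] W₂)).subtypeL : LinearMap.ker (D₂ : V →ₗ[ℝ] W₂) →ₗ[ℝ] W₁)) ↔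
        (w, (0 : W₂)) ∈ LinearMap.range ((D₁.prod D₂ : V →L[ℝ] W₁ × W₂) : V →ₗ[ℝ] W₁ × W₂) := by
    intro w
    constructor
    · rintro ⟨⟨v, hv⟩, rfl⟩
      refine ⟨v, ?_⟩
      have hv' : D₂ v = 0 := hv
      simp [ContinuousLinearMap.prod_apply, hv']
    · rintro ⟨v, hv⟩
      have h1 : D₁ v = w := congrArg Prod.fst hv
      have h2 : D₂ v = 0 := congrArg Prod.snd hv
      exact ⟨⟨v, h2⟩, h1⟩
  refine ⟨?_, ?_, ?_⟩
  · let f : LinearMap.ker ((D₁.comp (LinearMap.ker (D₂ : V →ₗ[ℝ] W₂)).subtypeL : LinearMap.ker (D₂ : V →ₗ[ℝ] W₂) →ₗ[ℝ] W₁)) →ₗ[ℝ]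
        LinearMap.ker ((D₁.prod D₂ : V →L[ℝ] W₁ × W₂) : V →ₗ[ℝ] W₁ × W₂) :=
      { toFun := fun x => ⟨x.1.1, by
          have h1 : D₁ x.1.1 = 0 := x.2
          have h2 : D₂ x.1.1 = 0 := x.1.2
          simp [LinearMap.mem_ker, ContinuousLinearMap.prod_apply, h1, h2, Prod.ext_iff]⟩
        map_add' := fun a b => rfl
        map_smul' := fun c a => rfl }
    refine FiniteDimensional.of_injective f (fun a b hab => ?_)
    have h' : (f a).val = (f b).val := congrArg Subtype.val hab
    exact Subtype.ext (Subtype.ext h')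
  · let q : W₁ →ₗ[ℝ] (W₁ × W₂) ⧸ LinearMap.range ((D₁.prod D₂ : V →L[ℝ] W₁ × W₂) : V →ₗ[ℝ] W₁ × W₂) :=
      (LinearMap.range ((D₁.prod D₂ : V →L[ℝ] W₁ × W₂) : V →ₗ[ℝ] W₁ × W₂)).mkQ.comp (LinearMap.inl ℝ W₁ W₂)
    have hker : LinearMap.ker q = LinearMap.range ((D₁.comp (LinearMap.ker (D₂ : V →ₗ[ℝ] W₂)).subtypeL : LinearMap.ker (D₂ : V →ₗ[ℝ] W₂) →ₗ[ℝ] W₁)) := by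
      ext w
      simp only [q, LinearMap.mem_ker, LinearMap.comp_apply, LinearMap.inl_apply,
        Submodule.mkQ_apply, Submodule.Quotient.mk_eq_zero, key w]
    have e := LinearMap.quotKerEquivRange q
    rw [hker] at e
    exact Module.Finite.equiv e.symm
  · have hset : (LinearMap.range ((D₁.comp (LinearMap.ker (D₂ : V →ₗ[ℝ] W₂)).subtypeL : LinearMap.ker (D₂ : V →ₗ[ℝ] W₂) →ₗ[ℝ] W₁)) : Set W₁) =
        (fun w : W₁ => (w, (0 : W₂))) ⁻¹'
          ((LinearMap.range ((D₁.prod D₂ : V →L[ℝ] W₁ × W₂) : V →ₗ[ℝ] W₁ × W₂) : Submodule ℝ (W₁ × W₂)) : Set (W₁ × W₂)) := by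
      ext w
      exact key w
    rw [hset]
    exact hcl.preimage (Continuous.prodMk continuous_id continuous_const)
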